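/- Let V be a finite set of n vertices, q a positive integer, and c : V → Fin q a classification of the vertices, with n_k denoting the number of vertices of class k. Let M be a symmetric q × q matrix of natural numbers such that M_{k,l} ≤ n_k · n_l for all k ≠ l and M_{k,k} ≤ n_k · (n_k − 1) / 2 for all k. Then there exists a simple graph G on V whose classification mixing matrix equals M, i.e., for every pair of classes k ≤ l, the number of edges of G with one endpoint of class k and the other of class l equals M_{k,l}. -/

import Mathlib

/-- The number of vertices of class `k` under classification `c`. -/
noncomputable def classSize {V : Type*} [Fintype V] {q : ℕ} (c : V → Fin q) (k : Fin q) : ℕ :=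
  (Finset.univ.filter (fun v => c v = k)).card

/-- The `(k,l)` entry of the classification mixing matrix of a simple graph `G`:
the number of edges of `G` whose two endpoints have classes `k` and `l`. -/
noncomputable def mixingMatrix {V : Type*} [Fintype V] {q : ℕ}
    (c : V → Fin q) (G : SimpleGraph V) (k l : Fin q) : ℕ :=
  {e ∈ G.edgeSet | Sym2.map c e = s(k, l)}.ncard

open Finset in
lemma card_sym2_not_diag {α : Type*} [DecidableEq α] (s : Finset α) :
    (s.sym2.filter (fun e => ¬ e.IsDiag)).card = s.card.choose 2 := by
  have hdiag : s.sym2.filter (fun e => e.IsDiag) = s.image Sym2.diag := by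
    ext e
    induction e with
    | _ x y =>
      simp only [mem_filter, Finset.mk_mem_sym2_iff, mem_image]
      constructor
      · rintro ⟨⟨hx, hy⟩, h⟩
        rw [Sym2.mk_isDiag_iff] at h
        exact ⟨x, hx, by rw [Sym2.diag, h]⟩
      · rintro ⟨a, ha, h⟩
        rw [Sym2.diag] at h
        obtain ⟨rfl, rfl⟩ | ⟨rfl, rfl⟩ := Sym2.eq_iff.mp h <;>
          simp [ha, Sym2.mk_isDiag_iff]
  have h1 := Finset.card_filter_add_card_filter_not
    (s := s.sym2) (p := fun e => e.IsDiag)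
  rw [hdiag, Finset.card_image_of_injective _ Sym2.diag_injective,
    Finset.card_sym2] at h1
  have h2 : (s.card + 1).choose 2 = s.card + s.card.choose 2 := by
    rw [Nat.choose_succ_succ, Nat.choose_one_right]
  omega

theorem mixing_matrix_graphical {V : Type*} [Fintype V] {q : ℕ} (hq : 0 < q)
    (c : V → Fin q) (M : Matrix (Fin q) (Fin q) ℕ) (hsymm : M.IsSymm)
    (hoff : ∀ k l : Fin q, k ≠ l → M k l ≤ classSize c k * classSize c l)
    (hdiag : ∀ k : Fin q, M k k ≤ classSize c k * (classSize c k - 1) / 2) :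
    ∃ G : SimpleGraph V, ∀ k l : Fin q, k ≤ l → mixingMatrix c G k l = M k l := by
  classical
  set m : Sym2 (Fin q) → ℕ := Sym2.lift ⟨fun k l => M k l, fun k l => by
    have := congrFun (congrFun hsymm l) k
    simpa [Matrix.transpose_apply] using this⟩ with hm
  set P : Sym2 (Fin q) → Finset (Sym2 V) :=
    fun p => Finset.univ.filter (fun e => ¬ e.IsDiag ∧ Sym2.map c e = p) with hP
  have hbound : ∀ k l : Fin q, M k l ≤ M k l := fun _ _ => le_rfl
  -- key counting bound
  have hcard : ∀ p : Sym2 (Fin q), m p ≤ (P p).card := by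
    intro p
    induction p with
    | _ k l =>
      have hmkl : m s(k, l) = M k l := rfl
      rw [hmkl]
      by_cases hkl : k = l
      · subst hkl
        have hPeq : P s(k, k) =
            ((Finset.univ.filter (fun v => c v = k)).sym2).filter (fun e => ¬ e.IsDiag) := by
          ext e
          induction e with
          | _ x y =>
            simp only [hP, Finset.mem_filter, Finset.mem_univ, true_and,
              Finset.mk_mem_sym2_iff, Sym2.map_pair_eq, Sym2.eq_iff]
            constructor
            · rintro ⟨hd, ⟨h1, h2⟩ | ⟨h1, h2⟩⟩ <;> exact ⟨⟨h1, h2⟩, hd⟩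
            · rintro ⟨⟨h1, h2⟩, hd⟩; exact ⟨hd, Or.inl ⟨h1, h2⟩⟩
        rw [hPeq, card_sym2_not_diag, Nat.choose_two_right]
        exact hdiag k
      · refine le_trans (hoff k l hkl) ?_
        have : classSize c k * classSize c l =
            ((Finset.univ.filter (fun v => c v = k)) ×ˢ
              (Finset.univ.filter (fun v => c v = l))).card := by
          rw [Finset.card_product]; rfl
        rw [this]
        apply Finset.card_le_card_of_injOn (fun ab => s(ab.1, ab.2))
        · rintro ⟨a, b⟩ hab
          simp only [Finset.mem_coe, Finset.mem_product, Finset.mem_filter, Finset.mem_univ, true_and] at hab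
          obtain ⟨ha, hb⟩ := hab
          refine Finset.mem_filter.mpr ⟨Finset.mem_univ _, ?_, ?_⟩
          · rw [Sym2.mk_isDiag_iff]
            intro h
            exact hkl (by rw [← ha, ← hb]; exact congrArg c h)
          · rw [Sym2.map_pair_eq, ha, hb]
        · rintro ⟨a, b⟩ hab ⟨a', b'⟩ hab' h
          simp only [Finset.mem_coe, Finset.mem_product, Finset.mem_filter,
            Finset.mem_univ, true_and] at hab hab'
          simp only [Sym2.eq_iff] at h
          obtain ⟨rfl, rfl⟩ | ⟨rfl, rfl⟩ := h
          · rfl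
          · exact absurd (hab.1 ▸ hab'.2 ▸ rfl) hkl
  -- choose edge sets
  have hchoose : ∀ p : Sym2 (Fin q), ∃ t ⊆ P p, t.card = m p := fun p =>
    Finset.exists_subset_card_eq (hcard p)
  choose S hSsub hScard using hchoose
  set T : Finset (Sym2 V) := Finset.univ.biUnion S with hT
  have hTnd : ∀ e ∈ T, ¬ e.IsDiag := by
    intro e he
    rw [hT, Finset.mem_biUnion] at he
    obtain ⟨p, _, hep⟩ := he
    have := hSsub p hep
    simp only [hP, Finset.mem_filter] at this
    exact this.2.1
  refine ⟨SimpleGraph.fromEdgeSet ↑T, ?_⟩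
  intro k l _
  have hedge : (SimpleGraph.fromEdgeSet (↑T : Set (Sym2 V))).edgeSet = ↑T := by
    rw [SimpleGraph.edgeSet_fromEdgeSet]
    ext e
    simp only [Set.mem_diff, Finset.mem_coe, Set.mem_setOf_eq]
    exact ⟨fun h => h.1, fun h => ⟨h, hTnd e h⟩⟩
  have hfilter : T.filter (fun e => Sym2.map c e = s(k, l)) = S s(k, l) := by
    ext e
    simp only [Finset.mem_filter, hT, Finset.mem_biUnion, Finset.mem_univ, true_and]
    constructor
    · rintro ⟨⟨p, hep⟩, hmap⟩
      have h2 := hSsub p hep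
      simp only [hP, Finset.mem_filter] at h2
      have hpe : p = s(k, l) := by rw [← h2.2.2, hmap]
      exact hpe ▸ hep
    · intro he
      have := hSsub _ he
      simp only [hP, Finset.mem_filter] at this
      exact ⟨⟨s(k, l), he⟩, this.2.2⟩
  have hset : {e ∈ (SimpleGraph.fromEdgeSet (↑T : Set (Sym2 V))).edgeSet |
      Sym2.map c e = s(k, l)}
      = ↑(T.filter (fun e => Sym2.map c e = s(k, l))) := by
    rw [hedge]
    ext e
    simp [Set.mem_setOf_eq]
  have : mixingMatrix c (SimpleGraph.fromEdgeSet ↑T) k l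
      = (T.filter (fun e => Sym2.map c e = s(k, l))).card := by
    rw [mixingMatrix, hset]
    exact Set.ncard_coe_finset _
  rw [this, hfilter, hScard]
  rfl
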